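/- arXiv:2502.02930 — 2 statements merged into one kernel-verified Lean document; each statement's English description precedes it below -/
import Mathlib

section
/- Let D be a proper subdomain of a Banach space, x ≠ y ∈ D, and let γ be a λ-curve with endpoints x and y. Then for any two distinct points z₁, z₂ on γ, the subarc γ[z₁,z₂] is a 2λ-curve with endpoints z₁, z₂. -/
open Set Metric MeasureTheory

noncomputable section

variable {E : Type*} [NormedAddCommGroup E]

/-- Distance from a point to the boundary (= complement) of `D`. -/
def dB (D : Set E) (z : E) : ℝ := Metric.infDist z Dᶜ

/-- `D` is a proper subdomain of the ambient space. -/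
def IsProperDomain (D : Set E) : Prop := IsOpen D ∧ IsConnected D ∧ Dᶜ.Nonempty

/-- A rectifiable arc inside `D`, parametrized by arclength on `[a,b]`. -/
structure IsArc (D : Set E) (γ : ℝ → E) (a b : ℝ) : Prop where
  le : a ≤ b
  lip : LipschitzOnWith 1 γ (Set.Icc a b)
  unit : ∀ s t, s ∈ Set.Icc a b → t ∈ Set.Icc a b → s ≤ t →
    eVariationOn γ (Set.Icc s t) = ENNReal.ofReal (t - s)
  mem : ∀ t ∈ Set.Icc a b, γ t ∈ D

/-- Quasihyperbolic length of the piece on `[a,b]` of an arclength-parametrized arc. -/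
def qhLen (D : Set E) (γ : ℝ → E) (a b : ℝ) : ℝ := ∫ t in a..b, 1 / dB D (γ t)

/-- The quasihyperbolic distance in `D`: infimum of quasihyperbolic lengths of
arcs joining the two points. -/
def qhDist (D : Set E) (x y : E) : ℝ :=
  sInf { L : ℝ | ∃ T : ℝ, ∃ γ : ℝ → E,
    IsArc D γ 0 T ∧ γ 0 = x ∧ γ T = y ∧ L = qhLen D γ 0 T }

/-- `γ` is a `c`-quasigeodesic in `D` on `[a,b]`. -/
def IsQuasigeodesicOn (D : Set E) (c : ℝ) (γ : ℝ → E) (a b : ℝ) : Prop :=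
  IsArc D γ a b ∧ ∀ s t, s ∈ Set.Icc a b → t ∈ Set.Icc a b → s ≤ t →
    qhLen D γ s t ≤ c * qhDist D (γ s) (γ t)

/-- The coefficient `c_{x,y}^λ = min (1 + λ/(2 k_D(x,y))) (9/8)`. -/
def cLam (D : Set E) (lam : ℝ) (x y : E) : ℝ :=
  min (1 + lam / (2 * qhDist D x y)) (9 / 8)

/-- `γ` is a `λ`-curve in `D` on `[a,b]`: a `c_{x,y}^λ`-quasigeodesic where `x,y`
are its endpoints. -/
def IsLamCurve (D : Set E) (lam : ℝ) (γ : ℝ → E) (a b : ℝ) : Prop :=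
  IsQuasigeodesicOn D (cLam D lam (γ a) (γ b)) γ a b

/-- `γ` is `h`-short in `D`. -/
def IsShort (D : Set E) (h : ℝ) (γ : ℝ → E) (a b : ℝ) : Prop :=
  IsArc D γ a b ∧ ∀ s t, s ∈ Set.Icc a b → t ∈ Set.Icc a b → s ≤ t →
    qhLen D γ s t ≤ qhDist D (γ s) (γ t) + h

/-- The point `w` lies within quasihyperbolic distance `C` of the union of the
two given sides. -/
def WithinOfSides (D : Set E) (C : ℝ) (w : E) (α : ℝ → E) (a b : ℝ)
    (α' : ℝ → E) (a' b' : ℝ) : Prop :=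
  ∃ s : ℝ, (s ∈ Set.Icc a b ∧ qhDist D w (α s) ≤ C) ∨
    (s ∈ Set.Icc a' b' ∧ qhDist D w (α' s) ≤ C)

/-- `(D, k_D)` is a `(C,h)`-Rips space: every side of an `h`-short triangle lies
in the `C`-neighbourhood of the two other sides. -/
def IsRips (D : Set E) (C h : ℝ) : Prop :=
  ∀ (α₁ α₂ α₃ : ℝ → E) (a₁ b₁ a₂ b₂ a₃ b₃ : ℝ),
    IsShort D h α₁ a₁ b₁ → IsShort D h α₂ a₂ b₂ → IsShort D h α₃ a₃ b₃ →
    α₁ b₁ = α₂ a₂ → α₂ b₂ = α₃ a₃ → α₃ b₃ = α₁ a₁ →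
    (∀ t ∈ Set.Icc a₁ b₁, WithinOfSides D C (α₁ t) α₂ a₂ b₂ α₃ a₃ b₃) ∧
    (∀ t ∈ Set.Icc a₂ b₂, WithinOfSides D C (α₂ t) α₃ a₃ b₃ α₁ a₁ b₁) ∧
    (∀ t ∈ Set.Icc a₃ b₃, WithinOfSides D C (α₃ t) α₁ a₁ b₁ α₂ a₂ b₂)

/-- `D` is `δ`-Gromov hyperbolic with respect to the quasihyperbolic metric. -/
def IsGromovHyp (D : Set E) (δ : ℝ) : Prop :=
  ∀ x ∈ D, ∀ y ∈ D, ∀ z ∈ D, ∀ p ∈ D,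
    min ((qhDist D p x + qhDist D p y - qhDist D x y) / 2)
        ((qhDist D p y + qhDist D p z - qhDist D y z) / 2) - δ ≤
      (qhDist D p x + qhDist D p z - qhDist D x z) / 2

/-- `μ` is a thin-triangles constant for triangles of `c₀`-quasigeodesics in `D`. -/
def ThinTriangles (D : Set E) (c₀ μ : ℝ) : Prop :=
  ∀ (γ₁ γ₂ γ₃ : ℝ → E) (a₁ b₁ a₂ b₂ a₃ b₃ : ℝ),
    IsQuasigeodesicOn D c₀ γ₁ a₁ b₁ → IsQuasigeodesicOn D c₀ γ₂ a₂ b₂ →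
    IsQuasigeodesicOn D c₀ γ₃ a₃ b₃ →
    γ₁ b₁ = γ₂ a₂ → γ₂ b₂ = γ₃ a₃ → γ₃ b₃ = γ₁ a₁ →
    ∀ t ∈ Set.Icc a₁ b₁, WithinOfSides D μ (γ₁ t) γ₂ a₂ b₂ γ₃ a₃ b₃

/-- `D` is a `c`-uniform domain. -/
def IsUniform (D : Set E) (c : ℝ) : Prop :=
  ∀ z₁ ∈ D, ∀ z₂ ∈ D, ∃ γ : ℝ → E, ∃ a b : ℝ, IsArc D γ a b ∧ γ a = z₁ ∧ γ b = z₂ ∧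
    (∀ t ∈ Set.Icc a b, min (t - a) (b - t) ≤ c * dB D (γ t)) ∧
    b - a ≤ c * ‖z₁ - z₂‖

/-- `D` is an `a`-John domain. -/
def IsJohn (D : Set E) (a : ℝ) : Prop :=
  ∀ z₁ ∈ D, ∀ z₂ ∈ D, ∃ γ : ℝ → E, ∃ s t : ℝ, IsArc D γ s t ∧ γ s = z₁ ∧ γ t = z₂ ∧
    ∀ u ∈ Set.Icc s t, min (u - s) (t - u) ≤ a * dB D (γ u)

/-- The inner (length) distance in `D`. -/
def innerDist (D : Set E) (x y : E) : ℝ :=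
  sInf { L : ℝ | ∃ γ : ℝ → E, ∃ s t : ℝ, IsArc D γ s t ∧ γ s = x ∧ γ t = y ∧ L = t - s }

/-- `γ` is an inner `b`-uniform curve in `D`. -/
def IsInnerUniformCurve (D : Set E) (b : ℝ) (γ : ℝ → E) (s t : ℝ) : Prop :=
  (∀ u ∈ Set.Icc s t, min (u - s) (t - u) ≤ b * dB D (γ u)) ∧
  t - s ≤ b * innerDist D (γ s) (γ t)

/-- `D` is an inner `b`-uniform domain. -/
def IsInnerUniform (D : Set E) (b : ℝ) : Prop :=
  ∀ z₁ ∈ D, ∀ z₂ ∈ D, ∃ γ : ℝ → E, ∃ s t : ℝ,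
    IsArc D γ s t ∧ γ s = z₁ ∧ γ t = z₂ ∧ IsInnerUniformCurve D b γ s t

/-- Length (total variation) of a curve on `[a,b]`. -/
def lenOn {F : Type*} [NormedAddCommGroup F] (γ : ℝ → F) (a b : ℝ) : ℝ :=
  (eVariationOn γ (Set.Icc a b)).toReal

variable {F : Type*} [NormedAddCommGroup F]

/-- `f` is a homeomorphism from `D` onto `D'`. -/
def IsHomeoOn (f : E → F) (D : Set E) (D' : Set F) : Prop :=
  ∃ g : F → E, ContinuousOn f D ∧ ContinuousOn g D' ∧ Set.MapsTo f D D' ∧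
    Set.MapsTo g D' D ∧ (∀ x ∈ D, g (f x) = x) ∧ (∀ y ∈ D', f (g y) = y)

/-- `f : D → D'` is `(M,C)`-coarsely quasihyperbolic. -/
def IsCQH (f : E → F) (D : Set E) (D' : Set F) (M C : ℝ) : Prop :=
  ∀ x ∈ D, ∀ y ∈ D,
    (qhDist D x y - C) / M ≤ qhDist D' (f x) (f y) ∧
    qhDist D' (f x) (f y) ≤ M * qhDist D x y + C

section Aux

variable [NormedSpace ℝ E]

/-- positivity of the boundary distance on `D`. -/
lemma dB_pos_aux {D : Set E} (hD : IsProperDomain D) {z : E} (hz : z ∈ D) : 0 < dB D z := by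
  have hcl : IsClosed Dᶜ := hD.1.isClosed_compl
  have := (hcl.notMem_iff_infDist_pos hD.2.2).1 (by simpa using hz)
  simpa [dB] using this

lemma integrable_aux {D : Set E} (hD : IsProperDomain D) {γ : ℝ → E} {a b : ℝ}
    (hA : IsArc D γ a b) {u v : ℝ} (hu : u ∈ Set.Icc a b) (hv : v ∈ Set.Icc a b) :
    IntervalIntegrable (fun τ => 1 / dB D (γ τ)) MeasureTheory.volume u v := by
  have hsub : Set.uIcc u v ⊆ Set.Icc a b := by
    rw [Set.uIcc_eq_union]
    exact Set.union_subset (Set.Icc_subset_Icc hu.1 hv.2) (Set.Icc_subset_Icc hv.1 hu.2)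
  have hγc : ContinuousOn γ (Set.Icc a b) := hA.lip.continuousOn
  have hcont : ContinuousOn (fun τ => 1 / dB D (γ τ)) (Set.Icc a b) := by
    apply ContinuousOn.div continuousOn_const
    · exact (continuous_infDist_pt Dᶜ).comp_continuousOn hγc
    · intro τ hτ
      exact (dB_pos_aux hD (hA.mem τ hτ)).ne'
  exact (hcont.mono hsub).intervalIntegrable

lemma qhLen_nonneg_aux {D : Set E} {γ : ℝ → E} {u v : ℝ} (huv : u ≤ v) :
    0 ≤ qhLen D γ u v := by
  apply intervalIntegral.integral_nonneg huv
  intro τ _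
  have : (0 : ℝ) ≤ dB D (γ τ) := Metric.infDist_nonneg
  positivity

lemma qhLen_mono_aux {D : Set E} (hD : IsProperDomain D) {γ : ℝ → E} {a b : ℝ}
    (hA : IsArc D γ a b) {s t u v : ℝ} (hs : s ∈ Set.Icc a b) (ht : t ∈ Set.Icc a b)
    (hsu : s ≤ u) (huv : u ≤ v) (hvt : v ≤ t) :
    qhLen D γ u v ≤ qhLen D γ s t := by
  have hu : u ∈ Set.Icc a b := ⟨hs.1.trans hsu, (huv.trans hvt).trans ht.2⟩
  have hv : v ∈ Set.Icc a b := ⟨hu.1.trans huv, hvt.trans ht.2⟩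
  have h1 := integrable_aux hD hA hs hu
  have h2 := integrable_aux hD hA hu hv
  have h3 := integrable_aux hD hA hv ht
  have e1 : qhLen D γ s v = qhLen D γ s u + qhLen D γ u v :=
    (intervalIntegral.integral_add_adjacent_intervals h1 h2).symm
  have e2 : qhLen D γ s t = qhLen D γ s v + qhLen D γ v t :=
    (intervalIntegral.integral_add_adjacent_intervals (h1.trans h2) h3).symm
  have n1 : 0 ≤ qhLen D γ s u := qhLen_nonneg_aux hsu
  have n3 : 0 ≤ qhLen D γ v t := qhLen_nonneg_aux hvt
  unfold qhLen at *
  linarith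

lemma qhDist_nonneg_aux (D : Set E) (x y : E) : 0 ≤ qhDist D x y := by
  apply Real.sInf_nonneg
  rintro L ⟨T, γ', hA, -, -, rfl⟩
  exact qhLen_nonneg_aux hA.le

lemma qhDist_le_qhLen_aux {D : Set E} {γ : ℝ → E} {a b : ℝ}
    (hA : IsArc D γ a b) {s t : ℝ} (hs : s ∈ Set.Icc a b) (ht : t ∈ Set.Icc a b)
    (hst : s ≤ t) : qhDist D (γ s) (γ t) ≤ qhLen D γ s t := by
  have hmem : qhLen D γ s t ∈ { L : ℝ | ∃ T : ℝ, ∃ γ' : ℝ → E,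
      IsArc D γ' 0 T ∧ γ' 0 = γ s ∧ γ' T = γ t ∧ L = qhLen D γ' 0 T } := by
    refine ⟨t - s, fun u => γ (u + s), ?_, by simp, by simp, ?_⟩
    · have hsub : ∀ u ∈ Set.Icc (0 : ℝ) (t - s), u + s ∈ Set.Icc a b := by
        intro u hu
        constructor
        · linarith [hu.1, hs.1]
        · linarith [hu.2, ht.2]
      refine ⟨by linarith, ?_, ?_, ?_⟩
      · intro p hp q hq
        have := hA.lip (hsub p hp) (hsub q hq)
        simpa [edist_add_right] using this
      · intro p q hp hq hpq
        have hmono : MonotoneOn (fun u : ℝ => u + s) (Set.Icc p q) := by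
          intro i _ j _ hij; simpa using hij
        have := eVariationOn.comp_eq_of_monotoneOn γ (fun u : ℝ => u + s) hmono
        have himg : (fun u : ℝ => u + s) '' Set.Icc p q = Set.Icc (p + s) (q + s) := by
          simpa using Set.image_add_const_Icc s p q
        rw [show (fun u => γ (u + s)) = γ ∘ (fun u : ℝ => u + s) from rfl, this, himg,
          hA.unit (p + s) (q + s) (hsub p hp) (hsub q hq) (by linarith)]
        ring_nf
      · intro u hu
        exact hA.mem (u + s) (hsub u hu)
    · show qhLen D γ s t = qhLen D (fun u => γ (u + s)) 0 (t - s)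
      unfold qhLen
      rw [intervalIntegral.integral_comp_add_right (fun τ => 1 / dB D (γ τ)) s]
      norm_num
  have hbdd : BddBelow { L : ℝ | ∃ T : ℝ, ∃ γ' : ℝ → E,
      IsArc D γ' 0 T ∧ γ' 0 = γ s ∧ γ' T = γ t ∧ L = qhLen D γ' 0 T } := by
    refine ⟨0, ?_⟩
    rintro L ⟨T, γ', hA', -, -, rfl⟩
    exact qhLen_nonneg_aux hA'.le
  exact csInf_le hbdd hmem

end Aux

/-- Every subarc of a `λ`-curve is a `2λ`-curve. -/
theorem stmt5 [NormedSpace ℝ E] [CompleteSpace E]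
    (D : Set E) (hD : IsProperDomain D) (lam : ℝ) (hlam₀ : 0 < lam) (hlam₁ : lam ≤ 1 / 2)
    (x y : E) (hx : x ∈ D) (hy : y ∈ D) (hxy : x ≠ y)
    (γ : ℝ → E) (a b : ℝ) (hγ : IsLamCurve D lam γ a b) (ha : γ a = x) (hb : γ b = y)
    (s t : ℝ) (hs : s ∈ Set.Icc a b) (ht : t ∈ Set.Icc a b) (hst : s < t) :
    IsLamCurve D (2 * lam) γ s t := by
  obtain ⟨hA, hQ⟩ := hγ
  have hsubset : Set.Icc s t ⊆ Set.Icc a b := Set.Icc_subset_Icc hs.1 ht.2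
  have hA' : IsArc D γ s t :=
    ⟨hst.le, hA.lip.mono hsubset,
     fun p q hp hq hpq => hA.unit p q (hsubset hp) (hsubset hq) hpq,
     fun p hp => hA.mem p (hsubset hp)⟩
  refine ⟨hA', ?_⟩
  intro u v hu hv huv
  set k := qhDist D (γ a) (γ b) with hk
  set kst := qhDist D (γ s) (γ t) with hkst
  set kuv := qhDist D (γ u) (γ v) with hkuv
  set cold := cLam D lam (γ a) (γ b) with hcold
  set cnew := cLam D (2 * lam) (γ s) (γ t) with hcnew
  have hk0 : 0 ≤ k := qhDist_nonneg_aux D _ _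
  have hkst0 : 0 ≤ kst := qhDist_nonneg_aux D _ _
  have hkuv0 : 0 ≤ kuv := qhDist_nonneg_aux D _ _
  have hcold_ge1 : (1 : ℝ) ≤ cold := by
    rw [hcold, cLam]
    refine le_min ?_ (by norm_num)
    have : 0 ≤ lam / (2 * k) := div_nonneg hlam₀.le (by linarith)
    linarith
  have hcold_le : cold ≤ 9 / 8 := min_le_right _ _
  have hcnew_ge1 : (1 : ℝ) ≤ cnew := by
    rw [hcnew, cLam]
    refine le_min ?_ (by norm_num)
    have : 0 ≤ 2 * lam / (2 * kst) := div_nonneg (by linarith) (by linarith)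
    linarith
  have hq := hQ u v (hsubset hu) (hsubset hv) huv
  -- two cases on kst
  rcases le_or_gt kst 0 with hzero | hpos
  · -- degenerate case : the whole subarc has zero qh-length
    have h1 : qhLen D γ u v ≤ qhLen D γ s t :=
      qhLen_mono_aux hD hA hs ht hu.1 huv hv.2
    have h2 : qhLen D γ s t ≤ cold * kst := hQ s t hs ht hst.le
    have h3 : cold * kst ≤ 0 :=
      mul_nonpos_of_nonneg_of_nonpos (by linarith) hzero
    have : qhLen D γ u v ≤ 0 := by linarith
    calc qhLen D γ u v ≤ 0 := this
      _ ≤ 1 * kuv := by linarith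
      _ ≤ cnew * kuv := by
          exact mul_le_mul_of_nonneg_right hcnew_ge1 hkuv0
  · -- main case
    have hkst2k : kst ≤ 2 * k := by
      have h1 : kst ≤ qhLen D γ s t := qhDist_le_qhLen_aux hA hs ht hst.le
      have h2 : qhLen D γ s t ≤ qhLen D γ a b :=
        qhLen_mono_aux hD hA (Set.left_mem_Icc.2 hA.le) (Set.right_mem_Icc.2 hA.le)
          hs.1 hst.le ht.2
      have h3 : qhLen D γ a b ≤ cold * k :=
        hQ a b (Set.left_mem_Icc.2 hA.le) (Set.right_mem_Icc.2 hA.le) hA.le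
      have h4 : cold * k ≤ (9 / 8) * k := mul_le_mul_of_nonneg_right hcold_le hk0
      nlinarith
    have hkpos : 0 < k := by linarith
    have hdiv : lam / (2 * k) ≤ 2 * lam / (2 * kst) := by
      rw [show 2 * lam / (2 * kst) = lam / kst by ring]
      apply div_le_div_of_nonneg_left hlam₀.le hpos hkst2k
    have hcc : cold ≤ cnew := by
      rw [hcold, hcnew, cLam, cLam]
      exact min_le_min (by linarith) le_rfl
    calc qhLen D γ u v ≤ cold * kuv := hq
      _ ≤ cnew * kuv := mul_le_mul_of_nonneg_right hcc hkuv0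

end
end

section
/- Define f on the planar disk B(2) = {x ∈ ℂ : |x| < 2} by f(x) = g(|x|)·x/|x| for x ≠ 0 and f(0) = 0, where g is the piecewise-linear radial homeomorphism of [0,2) given in the construction (g(t) = (3/2)t on [0,1/2), g = g_n affine on [1−2^{−n!}, 1−2^{−(n+1)!}) mapping this interval onto [1−2^{−(n+1)!}, 1−2^{−(n+2)!}), and g(t) = t on [1,2)). Then f : B(2) → B(2) is (1,4)-coarsely quasihyperbolic: |k_{B(2)}(f(x),f(y)) − k_{B(2)}(x,y)| ≤ 4 for all x,y. -/
open Set Metric MeasureTheory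

noncomputable section

variable {E : Type*} [NormedAddCommGroup E]

variable {F : Type*} [NormedAddCommGroup F]

/-- The slopes `a_n` from the construction of Example 1. -/
def aseq (n : ℕ) : ℝ :=
  ((2 : ℝ) ^ (n + 1).factorial * ((2 : ℝ) ^ ((n + 2).factorial - (n + 1).factorial) - 1)) /
    ((2 : ℝ) ^ (n + 2).factorial * ((2 : ℝ) ^ ((n + 1).factorial - n.factorial) - 1))

/-- The intercepts `b_n` from the construction of Example 1. -/
def bseq (n : ℕ) : ℝ :=
  1 - 1 / (2 : ℝ) ^ (n + 1).factorial - aseq n * (1 - 1 / (2 : ℝ) ^ n.factorial)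

/-- For `t ∈ [1/2, 1)`, the index `n` with `1 - 2^{-n!} ≤ t < 1 - 2^{-(n+1)!}`. -/
def nIdx (t : ℝ) : ℕ := sSup {n : ℕ | 1 - 1 / (2 : ℝ) ^ n.factorial ≤ t}

/-- The radial homeomorphism `g : [0,2) → [0,2)` of Example 1. -/
def gfun (t : ℝ) : ℝ :=
  if t < 1 / 2 then 3 / 2 * t
  else if t < 1 then aseq (nIdx t) * t + bseq (nIdx t)
  else t

/-- The map `f(x) = g(|x|) x / |x|` of Example 1 on the disk `B(2) ⊂ ℂ`. -/
def fmap (x : ℂ) : ℂ := if x = 0 then 0 else (gfun ‖x‖ / ‖x‖) • x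

section Aux

open Set Metric intervalIntegral

local notation "B2" => Metric.ball (0 : ℂ) 2

lemma dB_two {z : ℂ} (hz : ‖z‖ < 2) : dB B2 z = 2 - ‖z‖ := by
  have hcne : ((B2)ᶜ : Set ℂ).Nonempty := ⟨2, by simp [Metric.mem_ball]⟩
  apply le_antisymm
  · by_cases h0 : z = 0
    · subst h0
      have hw : (2 : ℂ) ∈ (B2)ᶜ := by simp [Metric.mem_ball]
      have := Metric.infDist_le_dist_of_mem (x := (0:ℂ)) hw
      simpa [dB, dist_eq_norm] using this
    · have hz0 : (0:ℝ) < ‖z‖ := norm_pos_iff.2 h0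
      have hwmem : ((2 / ‖z‖ : ℝ)) • z ∈ (B2)ᶜ := by
        simp only [Set.mem_compl_iff, Metric.mem_ball, dist_zero_right, not_lt, norm_smul]
        rw [Real.norm_eq_abs, abs_of_pos (by positivity), div_mul_cancel₀ _ (ne_of_gt hz0)]
      have := Metric.infDist_le_dist_of_mem (x := z) hwmem
      have hd : dist z (((2 / ‖z‖ : ℝ)) • z) = 2 - ‖z‖ := by
        rw [dist_eq_norm]
        have : z - ((2 / ‖z‖ : ℝ)) • z = ((1 - 2 / ‖z‖ : ℝ)) • z := by
          rw [sub_smul, one_smul]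
        have h1 : (1:ℝ) ≤ 2 / ‖z‖ := (one_le_div hz0).2 (by linarith)
        have habs : |1 - 2 / ‖z‖| = 2 / ‖z‖ - 1 := by
          rw [abs_of_nonpos (by linarith)]; ring
        rw [this, norm_smul, Real.norm_eq_abs, habs, sub_mul, one_mul,
          div_mul_cancel₀ _ (ne_of_gt hz0)]
      rw [← hd]; exact this
  · by_contra hcon
    push_neg at hcon
    obtain ⟨w, hw, hd⟩ := (Metric.infDist_lt_iff hcne).1 hcon
    simp only [Set.mem_compl_iff, Metric.mem_ball, dist_zero_right, not_lt] at hw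
    have : ‖w‖ - ‖z‖ ≤ dist z w := by
      rw [dist_comm, dist_eq_norm]
      exact (norm_sub_norm_le _ _).trans' le_rfl
    linarith

lemma evar_id {a b : ℝ} (hab : a ≤ b) :
    eVariationOn (id : ℝ → ℝ) (Set.Icc a b) = ENNReal.ofReal (b - a) := by
  apply le_antisymm
  · have h := MonotoneOn.eVariationOn_le (f := (id : ℝ → ℝ)) (s := Set.Icc a b)
      (fun x _ y _ h => h) (Set.left_mem_Icc.2 hab) (Set.right_mem_Icc.2 hab)
    simpa using h
  · have h := eVariationOn.edist_le (id : ℝ → ℝ)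
      (Set.right_mem_Icc.2 hab) (Set.left_mem_Icc.2 hab)
    refine le_trans (le_of_eq ?_) h
    rw [edist_dist, Real.dist_eq]
    simp [abs_of_nonneg (sub_nonneg.2 hab)]

lemma evar_le_of_lip {γ : ℝ → ℂ} {a b : ℝ} (hab : a ≤ b)
    (h : LipschitzOnWith 1 γ (Set.Icc a b)) :
    eVariationOn γ (Set.Icc a b) ≤ ENNReal.ofReal (b - a) := by
  have := LipschitzOnWith.comp_eVariationOn_le h (g := (id : ℝ → ℝ))
    (s := Set.Icc a b) (Set.mapsTo_id _)
  rw [evar_id hab] at this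
  simpa using this

lemma evar_eq_of_unit {γ : ℝ → ℂ} {a b : ℝ} (hab : a ≤ b)
    (h : ∀ s t : ℝ, dist (γ s) (γ t) = |s - t|) :
    eVariationOn γ (Set.Icc a b) = ENNReal.ofReal (b - a) := by
  apply le_antisymm
  · apply evar_le_of_lip hab
    rw [lipschitzOnWith_iff_dist_le_mul]
    intro x _ y _
    rw [h x y, Real.dist_eq]
    simp
  · have hle := eVariationOn.edist_le γ
      (Set.right_mem_Icc.2 hab) (Set.left_mem_Icc.2 hab)
    refine le_trans (le_of_eq ?_) hle
    rw [edist_dist, h b a, abs_of_nonneg (sub_nonneg.2 hab)]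

end Aux
section Seg

open Set Metric intervalIntegral

local notation "B2" => Metric.ball (0 : ℂ) 2

/-- Unit-speed segment from `p` towards `q`. -/
def seg (p q : ℂ) (t : ℝ) : ℂ := p + t • (‖q - p‖⁻¹ • (q - p))

lemma seg_zero (p q : ℂ) : seg p q 0 = p := by simp [seg]

lemma seg_end {p q : ℂ} (hpq : p ≠ q) : seg p q ‖q - p‖ = q := by
  have h : ‖q - p‖ ≠ 0 := by
    simpa [sub_eq_zero] using fun h => hpq h.symm
  rw [seg, smul_smul, mul_inv_cancel₀ h, one_smul]
  abel

lemma seg_dist {p q : ℂ} (hpq : p ≠ q) (s t : ℝ) :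
    dist (seg p q s) (seg p q t) = |s - t| := by
  have h : ‖q - p‖ ≠ 0 := by
    simpa [sub_eq_zero] using fun h => hpq h.symm
  have hd : seg p q s - seg p q t = (s - t) • (‖q - p‖⁻¹ • (q - p)) := by
    simp only [seg]; rw [sub_smul]; abel
  rw [dist_eq_norm, hd, norm_smul, norm_smul, Real.norm_eq_abs, Real.norm_eq_abs,
    abs_of_nonneg (inv_nonneg.2 (norm_nonneg _)), inv_mul_cancel₀ h, mul_one]

lemma seg_norm_lt {p q : ℂ} {r : ℝ} (hp : ‖p‖ < r) (hq : ‖q‖ < r) (hpq : p ≠ q)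
    {t : ℝ} (ht : t ∈ Set.Icc 0 ‖q - p‖) : ‖seg p q t‖ < r := by
  have hL : (0:ℝ) < ‖q - p‖ := by
    rw [norm_pos_iff, sub_ne_zero]; exact fun h => hpq h.symm
  set s : ℝ := t / ‖q - p‖ with hs
  have hs0 : 0 ≤ s := div_nonneg ht.1 hL.le
  have hs1 : s ≤ 1 := (div_le_one hL).2 ht.2
  have hrepr : seg p q t = (1 - s) • p + s • q := by
    rw [seg, smul_smul, hs, div_eq_mul_inv]
    rw [sub_smul, one_smul, smul_sub]
    abel
  rw [hrepr]
  calc ‖(1 - s) • p + s • q‖ ≤ ‖(1 - s) • p‖ + ‖s • q‖ := norm_add_le _ _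
    _ = (1 - s) * ‖p‖ + s * ‖q‖ := by
        rw [norm_smul, norm_smul, Real.norm_eq_abs, Real.norm_eq_abs,
          abs_of_nonneg (by linarith), abs_of_nonneg hs0]
    _ < r := by
        have h1 := mul_le_mul_of_nonneg_left (le_max_left ‖p‖ ‖q‖) (by linarith : (0:ℝ) ≤ 1 - s)
        have h2 := mul_le_mul_of_nonneg_left (le_max_right ‖p‖ ‖q‖) hs0
        have h3 : max ‖p‖ ‖q‖ < r := max_lt hp hq
        nlinarith [h1, h2, h3]

lemma seg_isArc {p q : ℂ} {r : ℝ} (hp : ‖p‖ < r) (hq : ‖q‖ < r) (hr : r ≤ 2)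
    (hpq : p ≠ q) : IsArc B2 (seg p q) 0 ‖q - p‖ := by
  refine ⟨norm_nonneg _, ?_, ?_, ?_⟩
  · rw [lipschitzOnWith_iff_dist_le_mul]
    intro x _ y _
    rw [seg_dist hpq, Real.dist_eq]
    simp
  · intro s t _ _ hst
    rw [evar_eq_of_unit hst (seg_dist hpq)]
  · intro t ht
    rw [Metric.mem_ball, dist_zero_right]
    exact lt_of_lt_of_le (seg_norm_lt hp hq hpq ht) hr

end Seg
section Cat

open Set Metric intervalIntegral

local notation "B2" => Metric.ball (0 : ℂ) 2

lemma mem_B2_norm {z : ℂ} (h : z ∈ B2) : ‖z‖ < 2 := by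
  rwa [Metric.mem_ball, dist_zero_right] at h

lemma dB_pos {z : ℂ} (h : z ∈ B2) : 0 < dB B2 z := by
  rw [dB_two (mem_B2_norm h)]; linarith [mem_B2_norm h]

lemma isArc_contOn {γ : ℝ → ℂ} {a b : ℝ} (harc : IsArc B2 γ a b) :
    ContinuousOn (fun t => 1 / dB B2 (γ t)) (Set.Icc a b) := by
  have hγ : ContinuousOn γ (Set.Icc a b) := harc.lip.continuousOn
  have hdb : ContinuousOn (fun t => dB B2 (γ t)) (Set.Icc a b) :=
    (Metric.continuous_infDist_pt _).comp_continuousOn hγ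
  exact continuousOn_const.div hdb (fun t ht => (dB_pos (harc.mem t ht)).ne')

lemma isArc_integrable {γ : ℝ → ℂ} {a b : ℝ} (harc : IsArc B2 γ a b)
    {c d : ℝ} (hsub : Set.Icc c d ⊆ Set.Icc a b) (hcd : c ≤ d) :
    IntervalIntegrable (fun t => 1 / dB B2 (γ t)) MeasureTheory.volume c d := by
  apply ContinuousOn.intervalIntegrable
  rw [Set.uIcc_of_le hcd]
  exact (isArc_contOn harc).mono hsub

lemma qhLen_nonneg {γ : ℝ → ℂ} {a b : ℝ} (hab : a ≤ b) :
    0 ≤ qhLen B2 γ a b :=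
  intervalIntegral.integral_nonneg hab
    (fun u _ => div_nonneg zero_le_one Metric.infDist_nonneg)

lemma qhLen_le {γ : ℝ → ℂ} {T : ℝ} (harc : IsArc B2 γ 0 T)
    {c : ℝ} (hb : ∀ t ∈ Set.Icc 0 T, 1 / dB B2 (γ t) ≤ c) :
    qhLen B2 γ 0 T ≤ c * T := by
  have h1 : qhLen B2 γ 0 T ≤ ∫ _ in (0:ℝ)..T, c := by
    apply intervalIntegral.integral_mono_on harc.le
      (isArc_integrable harc le_rfl harc.le) intervalIntegrable_const hb
  simpa [mul_comm] using h1

/-- Concatenation of two curves. -/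
def cat (β γ : ℝ → ℂ) (L : ℝ) (t : ℝ) : ℂ := if t ≤ L then β t else γ (t - L)

lemma cat_left {β γ : ℝ → ℂ} {L t : ℝ} (h : t ≤ L) : cat β γ L t = β t := if_pos h

lemma cat_right {β γ : ℝ → ℂ} {L t : ℝ} (hj : β L = γ 0) (h : L ≤ t) :
    cat β γ L t = γ (t - L) := by
  rcases eq_or_lt_of_le h with h' | h'
  · rw [cat, if_pos h'.symm.le, ← h', sub_self, ← hj]
  · rw [cat, if_neg (not_le.2 h')]

lemma cat_isArc {β γ : ℝ → ℂ} {L₁ L₂ : ℝ} (hβ : IsArc B2 β 0 L₁)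
    (hγ : IsArc B2 γ 0 L₂) (hj : β L₁ = γ 0) :
    IsArc B2 (cat β γ L₁) 0 (L₁ + L₂) := by
  have hL₁ := hβ.le
  have hL₂ := hγ.le
  have distβ : ∀ s ∈ Set.Icc (0:ℝ) L₁, ∀ t ∈ Set.Icc (0:ℝ) L₁,
      dist (β s) (β t) ≤ |s - t| := by
    intro s hs t ht
    have := lipschitzOnWith_iff_dist_le_mul.1 hβ.lip s hs t ht
    simpa [Real.dist_eq] using this
  have distγ : ∀ s ∈ Set.Icc (0:ℝ) L₂, ∀ t ∈ Set.Icc (0:ℝ) L₂,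
      dist (γ s) (γ t) ≤ |s - t| := by
    intro s hs t ht
    have := lipschitzOnWith_iff_dist_le_mul.1 hγ.lip s hs t ht
    simpa [Real.dist_eq] using this
  have key : ∀ s t, s ∈ Set.Icc (0:ℝ) (L₁ + L₂) → t ∈ Set.Icc (0:ℝ) (L₁ + L₂) →
      s ≤ t → dist (cat β γ L₁ s) (cat β γ L₁ t) ≤ t - s := by
    intro s t hs ht hst
    rcases le_or_gt t L₁ with h1 | h1
    · rw [cat_left (hst.trans h1), cat_left h1]
      have := distβ s ⟨hs.1, hst.trans h1⟩ t ⟨hs.1.trans hst, h1⟩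
      rwa [abs_of_nonpos (by linarith), neg_sub] at this
    rcases le_or_gt L₁ s with h2 | h2
    · rw [cat_right hj h2, cat_right hj h1.le]
      have := distγ (s - L₁) ⟨by linarith, by linarith [ht.2]⟩
        (t - L₁) ⟨by linarith, by linarith [ht.2]⟩
      rw [abs_of_nonpos (by linarith), neg_sub] at this
      calc dist (γ (s - L₁)) (γ (t - L₁)) ≤ t - L₁ - (s - L₁) := this
        _ = t - s := by ring
    · calc dist (cat β γ L₁ s) (cat β γ L₁ t)
          ≤ dist (cat β γ L₁ s) (cat β γ L₁ L₁) + dist (cat β γ L₁ L₁) (cat β γ L₁ t) :=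
            dist_triangle _ _ _
        _ ≤ (L₁ - s) + (t - L₁) := by
            apply add_le_add
            · rw [cat_left h2.le, cat_left le_rfl]
              have := distβ s ⟨hs.1, h2.le⟩ L₁ ⟨hL₁, le_rfl⟩
              rwa [abs_of_nonpos (by linarith), neg_sub] at this
            · rw [cat_right hj le_rfl, cat_right hj h1.le, sub_self]
              have := distγ 0 ⟨le_rfl, hL₂⟩ (t - L₁) ⟨by linarith, by linarith [ht.2]⟩
              rwa [abs_of_nonpos (by linarith), neg_sub, sub_zero] at this
        _ = t - s := by ring
  have evar_left : ∀ s t : ℝ, 0 ≤ s → s ≤ t → t ≤ L₁ →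
      eVariationOn (cat β γ L₁) (Set.Icc s t) = ENNReal.ofReal (t - s) := by
    intro s t h0 hst htL
    rw [eVariationOn.eq_of_eqOn (fun u hu => cat_left ((hu.2 : u ≤ t).trans htL))]
    exact hβ.unit s t ⟨h0, hst.trans htL⟩ ⟨h0.trans hst, htL⟩ hst
  have evar_right : ∀ s t : ℝ, L₁ ≤ s → s ≤ t → t ≤ L₁ + L₂ →
      eVariationOn (cat β γ L₁) (Set.Icc s t) = ENNReal.ofReal (t - s) := by
    intro s t hLs hst htL
    rw [eVariationOn.eq_of_eqOn
      (fun u hu => cat_right hj ((hu.1 : s ≤ u).trans' hLs))]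
    have hcomp := eVariationOn.comp_eq_of_monotoneOn γ (fun u : ℝ => u - L₁)
      (t := Set.Icc s t) (fun x _ y _ hxy => by simpa using hxy)
    have himg : (fun u : ℝ => u - L₁) '' Set.Icc s t = Set.Icc (s - L₁) (t - L₁) :=
      Set.image_sub_const_Icc _ _ _
    rw [himg] at hcomp
    have : eVariationOn (fun u : ℝ => γ (u - L₁)) (Set.Icc s t)
        = eVariationOn γ (Set.Icc (s - L₁) (t - L₁)) := hcomp
    rw [this, hγ.unit (s - L₁) (t - L₁) ⟨by linarith, by linarith⟩
      ⟨by linarith, by linarith⟩ (by linarith)]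
    congr 1; ring
  refine ⟨by linarith, ?_, ?_, ?_⟩
  · rw [lipschitzOnWith_iff_dist_le_mul]
    intro x hx y hy
    rcases le_total x y with h | h
    · have := key x y hx hy h
      rw [Real.dist_eq]
      calc dist (cat β γ L₁ x) (cat β γ L₁ y) ≤ y - x := this
        _ ≤ ↑(1:NNReal) * |x - y| := by rw [abs_sub_comm, abs_of_nonneg (by linarith)]; simp
    · have := key y x hy hx h
      rw [Real.dist_eq, dist_comm]
      calc dist (cat β γ L₁ y) (cat β γ L₁ x) ≤ x - y := this
        _ ≤ ↑(1:NNReal) * |x - y| := by rw [abs_of_nonneg (by linarith)]; simp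
  · intro s t hs ht hst
    rcases le_or_gt t L₁ with h1 | h1
    · exact evar_left s t hs.1 hst h1
    rcases le_or_gt L₁ s with h2 | h2
    · exact evar_right s t h2 hst ht.2
    · have hIcc := eVariationOn.Icc_add_Icc (cat β γ L₁) (s := Set.univ)
        (a := s) (b := L₁) (c := t) h2.le h1.le (Set.mem_univ _)
      simp only [Set.univ_inter] at hIcc
      rw [← hIcc, evar_left s L₁ hs.1 h2.le le_rfl,
        evar_right L₁ t le_rfl h1.le ht.2,
        ← ENNReal.ofReal_add (by linarith) (by linarith)]
      congr 1; ring
  · intro t ht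
    rcases le_or_gt t L₁ with h1 | h1
    · rw [cat_left h1]; exact hβ.mem t ⟨ht.1, h1⟩
    · rw [cat_right hj h1.le]
      exact hγ.mem (t - L₁) ⟨by linarith, by linarith [ht.2]⟩

lemma cat_qhLen {β γ : ℝ → ℂ} {L₁ L₂ : ℝ} (hβ : IsArc B2 β 0 L₁)
    (hγ : IsArc B2 γ 0 L₂) (hj : β L₁ = γ 0) :
    qhLen B2 (cat β γ L₁) 0 (L₁ + L₂) = qhLen B2 β 0 L₁ + qhLen B2 γ 0 L₂ := by
  have harc := cat_isArc hβ hγ hj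
  have hL₁ := hβ.le
  have hL₂ := hγ.le
  have i1 : IntervalIntegrable (fun t => 1 / dB B2 (cat β γ L₁ t))
      MeasureTheory.volume 0 L₁ :=
    isArc_integrable harc (Set.Icc_subset_Icc le_rfl (by linarith)) hL₁
  have i2 : IntervalIntegrable (fun t => 1 / dB B2 (cat β γ L₁ t))
      MeasureTheory.volume L₁ (L₁ + L₂) :=
    isArc_integrable harc (Set.Icc_subset_Icc hL₁ le_rfl) (by linarith)
  have hsplit := intervalIntegral.integral_add_adjacent_intervals i1 i2
  have e1 : (∫ t in (0:ℝ)..L₁, 1 / dB B2 (cat β γ L₁ t)) = qhLen B2 β 0 L₁ := by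
    apply intervalIntegral.integral_congr
    intro u hu
    rw [Set.uIcc_of_le hL₁] at hu
    show 1 / dB B2 (cat β γ L₁ u) = 1 / dB B2 (β u)
    rw [cat_left hu.2]
  have e2 : (∫ t in L₁..(L₁ + L₂), 1 / dB B2 (cat β γ L₁ t)) = qhLen B2 γ 0 L₂ := by
    have e2a : (∫ t in L₁..(L₁ + L₂), 1 / dB B2 (cat β γ L₁ t))
        = ∫ t in L₁..(L₁ + L₂), 1 / dB B2 (γ (t - L₁)) := by
      apply intervalIntegral.integral_congr
      intro u hu
      rw [Set.uIcc_of_le (by linarith : L₁ ≤ L₁ + L₂)] at hu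
      show 1 / dB B2 (cat β γ L₁ u) = 1 / dB B2 (γ (u - L₁))
      rw [cat_right hj hu.1]
    have e2b := intervalIntegral.integral_comp_sub_right
      (f := fun t => 1 / dB B2 (γ t)) (a := L₁) (b := L₁ + L₂) L₁
    rw [e2a, e2b, sub_self, add_sub_cancel_left]
    rfl
  rw [qhLen, ← hsplit, e1, e2]

end Cat
section Dist

open Set Metric intervalIntegral

local notation "B2" => Metric.ball (0 : ℂ) 2

lemma qhDist_bddBelow (x y : ℂ) :
    BddBelow { L : ℝ | ∃ T : ℝ, ∃ γ : ℝ → ℂ,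
      IsArc B2 γ 0 T ∧ γ 0 = x ∧ γ T = y ∧ L = qhLen B2 γ 0 T } := by
  refine ⟨0, ?_⟩
  rintro L ⟨T, γ, harc, -, -, rfl⟩
  exact qhLen_nonneg harc.le

lemma qhDist_nonneg' (x y : ℂ) : 0 ≤ qhDist B2 x y := by
  apply Real.sInf_nonneg
  rintro L ⟨T, γ, harc, -, -, rfl⟩
  exact qhLen_nonneg harc.le

lemma qhDist_le_qhLen {γ : ℝ → ℂ} {T : ℝ} {x y : ℂ} (harc : IsArc B2 γ 0 T)
    (h0 : γ 0 = x) (hT : γ T = y) : qhDist B2 x y ≤ qhLen B2 γ 0 T :=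
  csInf_le (qhDist_bddBelow x y) ⟨T, γ, harc, h0, hT, rfl⟩

lemma const_isArc {x : ℂ} (hx : ‖x‖ < 2) : IsArc B2 (fun _ : ℝ => x) 0 0 := by
  refine ⟨le_rfl, ((LipschitzWith.const x).weaken zero_le_one).lipschitzOnWith, ?_, ?_⟩
  · intro s t hs ht _
    have hs0 : s = 0 := le_antisymm hs.2 hs.1
    have ht0 : t = 0 := le_antisymm ht.2 ht.1
    subst hs0; subst ht0
    rw [Set.Icc_self]
    rw [eVariationOn.subsingleton _ (Set.subsingleton_singleton)]
    simp
  · intro t _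
    rw [Metric.mem_ball, dist_zero_right]; exact hx

lemma arc_exists {x y : ℂ} (hx : ‖x‖ < 2) (hy : ‖y‖ < 2) :
    ∃ T : ℝ, ∃ γ : ℝ → ℂ, IsArc B2 γ 0 T ∧ γ 0 = x ∧ γ T = y := by
  by_cases hxy : x = y
  · exact ⟨0, fun _ => x, const_isArc hx, rfl, hxy⟩
  · exact ⟨‖y - x‖, seg x y, seg_isArc hx hy le_rfl hxy, seg_zero x y, seg_end hxy⟩

lemma qhDist_set_nonempty {x y : ℂ} (hx : ‖x‖ < 2) (hy : ‖y‖ < 2) :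
    Set.Nonempty { L : ℝ | ∃ T : ℝ, ∃ γ : ℝ → ℂ,
      IsArc B2 γ 0 T ∧ γ 0 = x ∧ γ T = y ∧ L = qhLen B2 γ 0 T } := by
  obtain ⟨T, γ, harc, h0, hT⟩ := arc_exists hx hy
  exact ⟨qhLen B2 γ 0 T, T, γ, harc, h0, hT, rfl⟩

lemma seg_qhLen_le {p q : ℂ} (hp : ‖p‖ < 1) (hq : ‖q‖ < 1) (hpq : p ≠ q) :
    qhLen B2 (seg p q) 0 ‖q - p‖ ≤ 2 := by
  have h1 : (1:ℝ) < 2 := one_lt_two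
  have harc := seg_isArc hp hq h1.le hpq
  have hb : ∀ t ∈ Set.Icc (0:ℝ) ‖q - p‖, 1 / dB B2 (seg p q t) ≤ 1 := by
    intro t ht
    have hlt : ‖seg p q t‖ < 1 := seg_norm_lt hp hq hpq ht
    rw [dB_two (by linarith)]
    rw [div_le_one (by linarith)]
    linarith
  have := qhLen_le harc hb
  have hL : ‖q - p‖ ≤ ‖q‖ + ‖p‖ := norm_sub_le _ _
  calc qhLen B2 (seg p q) 0 ‖q - p‖ ≤ 1 * ‖q - p‖ := this
    _ ≤ 2 := by rw [one_mul]; linarith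

/-- Two points in the unit disk are at quasihyperbolic distance at most 2 in `B(2)`. -/
lemma qhDist_le_two {u v : ℂ} (hu : ‖u‖ < 1) (hv : ‖v‖ < 1) :
    qhDist B2 u v ≤ 2 := by
  by_cases huv : u = v
  · subst huv
    have := qhDist_le_qhLen (const_isArc (by linarith)) rfl rfl
    have h0 : qhLen B2 (fun _ : ℝ => u) 0 0 = 0 := intervalIntegral.integral_same
    linarith [this, h0.le]
  · calc qhDist B2 u v ≤ qhLen B2 (seg u v) 0 ‖v - u‖ :=
        qhDist_le_qhLen (seg_isArc hu hv one_le_two huv) (seg_zero u v) (seg_end huv)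
      _ ≤ 2 := seg_qhLen_le hu hv huv

lemma qhDist_prepend {p q z : ℂ} (hp : ‖p‖ < 1) (hq : ‖q‖ < 1) (hz : ‖z‖ < 2) :
    qhDist B2 p z ≤ 2 + qhDist B2 q z := by
  by_cases hpq : p = q
  · subst hpq; linarith [qhDist_nonneg' p z]
  have hkey : ∀ L ∈ { L : ℝ | ∃ T : ℝ, ∃ γ : ℝ → ℂ,
      IsArc B2 γ 0 T ∧ γ 0 = q ∧ γ T = z ∧ L = qhLen B2 γ 0 T },
      qhDist B2 p z ≤ 2 + L := by
    rintro L ⟨T, γ, harc, h0, hT, rfl⟩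
    have hseg : IsArc B2 (seg p q) 0 ‖q - p‖ := seg_isArc hp hq one_le_two hpq
    have hjoin : seg p q ‖q - p‖ = γ 0 := by rw [seg_end hpq, h0]
    have hcat := cat_isArc hseg harc hjoin
    have hlen := cat_qhLen hseg harc hjoin
    have hstart : cat (seg p q) γ ‖q - p‖ 0 = p := by
      rw [cat_left (norm_nonneg _), seg_zero]
    have hend : cat (seg p q) γ ‖q - p‖ (‖q - p‖ + T) = z := by
      rw [cat_right hjoin (by linarith [harc.le]), add_sub_cancel_left, hT]
    have h1 := qhDist_le_qhLen hcat hstart hend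
    rw [hlen] at h1
    have h2 := seg_qhLen_le hp hq hpq
    linarith
  have hne := qhDist_set_nonempty (by linarith : ‖q‖ < 2) hz
  have h3 : qhDist B2 p z - 2 ≤ qhDist B2 q z := by
    apply le_csInf hne
    intro L hL
    linarith [hkey L hL]
  linarith

lemma qhDist_append {w p q : ℂ} (hw : ‖w‖ < 2) (hp : ‖p‖ < 1) (hq : ‖q‖ < 1) :
    qhDist B2 w q ≤ qhDist B2 w p + 2 := by
  by_cases hpq : p = q
  · subst hpq; linarith [qhDist_nonneg' w p]
  have hkey : ∀ L ∈ { L : ℝ | ∃ T : ℝ, ∃ γ : ℝ → ℂ,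
      IsArc B2 γ 0 T ∧ γ 0 = w ∧ γ T = p ∧ L = qhLen B2 γ 0 T },
      qhDist B2 w q ≤ L + 2 := by
    rintro L ⟨T, γ, harc, h0, hT, rfl⟩
    have hseg : IsArc B2 (seg p q) 0 ‖q - p‖ := seg_isArc hp hq one_le_two hpq
    have hjoin : γ T = seg p q 0 := by rw [seg_zero, hT]
    have hcat := cat_isArc harc hseg hjoin
    have hlen := cat_qhLen harc hseg hjoin
    have hstart : cat γ (seg p q) T 0 = w := by
      rw [cat_left harc.le, h0]
    have hend : cat γ (seg p q) T (T + ‖q - p‖) = q := by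
      rw [cat_right hjoin (by linarith [norm_nonneg (q - p)]), add_sub_cancel_left,
        seg_end hpq]
    have h1 := qhDist_le_qhLen hcat hstart hend
    rw [hlen] at h1
    have h2 := seg_qhLen_le hp hq hpq
    linarith
  have hne := qhDist_set_nonempty hw (by linarith : ‖p‖ < 2)
  have h3 : qhDist B2 w q - 2 ≤ qhDist B2 w p := by
    apply le_csInf hne
    intro L hL
    linarith [hkey L hL]
  linarith

end Dist
section Gfun

open Set Metric

lemma two_pow_lt_two_pow {a b : ℕ} (h : a < b) : (2:ℝ) ^ a < (2:ℝ) ^ b :=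
  pow_lt_pow_right₀ one_lt_two h

lemma aseq_pos {n : ℕ} (hn : 1 ≤ n) : 0 < aseq n := by
  have h1 : (n + 1).factorial < (n + 2).factorial :=
    (Nat.factorial_lt (by omega)).2 (by omega)
  have h2 : n.factorial < (n + 1).factorial :=
    (Nat.factorial_lt (by omega)).2 (by omega)
  have e1 : (1:ℝ) < 2 ^ ((n + 2).factorial - (n + 1).factorial) := by
    have : (2:ℝ) ^ 0 < 2 ^ ((n + 2).factorial - (n + 1).factorial) :=
      two_pow_lt_two_pow (by omega)
    simpa using this
  have e2 : (1:ℝ) < 2 ^ ((n + 1).factorial - n.factorial) := by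
    have : (2:ℝ) ^ 0 < 2 ^ ((n + 1).factorial - n.factorial) :=
      two_pow_lt_two_pow (by omega)
    simpa using this
  apply div_pos
  · exact mul_pos (by positivity) (by linarith)
  · exact mul_pos (by positivity) (by linarith)

lemma key_alg {x y z : ℝ} (hx : 0 < x) (hy : 0 < y) (hz : 0 < z) (hxy : x < y) :
    (y * (z / y - 1)) / (z * (y / x - 1)) * (1 / x - 1 / y) = 1 / y - 1 / z := by
  have hyx : y - x ≠ 0 := by linarith
  have r1 : y / x - 1 = (y - x) / x := by field_simp
  have r2 : z / y - 1 = (z - y) / y := by field_simp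
  rw [r1, r2]
  field_simp

lemma aseq_key {n : ℕ} (hn : 1 ≤ n) :
    aseq n * (1 / (2:ℝ) ^ n.factorial - 1 / (2:ℝ) ^ (n + 1).factorial)
      = 1 / (2:ℝ) ^ (n + 1).factorial - 1 / (2:ℝ) ^ (n + 2).factorial := by
  have hAB : n.factorial < (n + 1).factorial := (Nat.factorial_lt (by omega)).2 (by omega)
  have hBC : (n + 1).factorial < (n + 2).factorial :=
    (Nat.factorial_lt (by omega)).2 (by omega)
  have e1 : (2:ℝ) ^ ((n + 2).factorial - (n + 1).factorial)
      = 2 ^ (n + 2).factorial / 2 ^ (n + 1).factorial := by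
    rw [eq_div_iff (by positivity), ← pow_add, Nat.sub_add_cancel hBC.le]
  have e2 : (2:ℝ) ^ ((n + 1).factorial - n.factorial)
      = 2 ^ (n + 1).factorial / 2 ^ n.factorial := by
    rw [eq_div_iff (by positivity), ← pow_add, Nat.sub_add_cancel hAB.le]
  rw [aseq, e1, e2]
  exact key_alg (by positivity) (by positivity) (by positivity)
    (two_pow_lt_two_pow hAB)

end Gfun

section Gfun2
open Set Metric

lemma nIdx_spec {t : ℝ} (h1 : 1 / 2 ≤ t) (h2 : t < 1) :
    1 ≤ nIdx t ∧ 1 - 1 / (2:ℝ) ^ (nIdx t).factorial ≤ t ∧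
      t < 1 - 1 / (2:ℝ) ^ ((nIdx t) + 1).factorial := by
  set S : Set ℕ := {n : ℕ | 1 - 1 / (2:ℝ) ^ n.factorial ≤ t} with hS
  have h1S : 1 ∈ S := by
    simp only [hS, Set.mem_setOf_eq, Nat.factorial_one, pow_one]
    linarith
  have hbdd : BddAbove S := by
    refine ⟨⌈1 / (1 - t)⌉₊, ?_⟩
    intro n hn
    simp only [hS, Set.mem_setOf_eq] at hn
    have hpos : (0:ℝ) < 1 - t := by linarith
    have hp : (0:ℝ) < 2 ^ n.factorial := by positivity
    have h3 : (1 - t) * 2 ^ n.factorial ≤ 1 := by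
      have := mul_le_mul_of_nonneg_right (show 1 - t ≤ 1 / 2 ^ n.factorial by linarith) hp.le
      rwa [div_mul_cancel₀ _ hp.ne'] at this
    have h4 : (2:ℝ) ^ n.factorial ≤ 1 / (1 - t) := by
      rw [le_div_iff₀ hpos, mul_comm]; exact h3
    have h5 : (n:ℝ) ≤ 2 ^ n.factorial := by
      have hn1 : n ≤ n.factorial := Nat.self_le_factorial n
      have hn2 : n.factorial < 2 ^ n.factorial := Nat.lt_two_pow_self
      have : (n:ℝ) ≤ ((2:ℕ) ^ n.factorial : ℕ) := by exact_mod_cast le_trans hn1 hn2.le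
      simpa using this
    have h6 : (n:ℝ) ≤ (⌈1 / (1 - t)⌉₊ : ℝ) := le_trans (h5.trans h4) (Nat.le_ceil _)
    exact_mod_cast h6
  have hmem : nIdx t ∈ S := by
    rw [nIdx, ← hS]; exact Nat.sSup_mem ⟨1, h1S⟩ hbdd
  have hge1 : 1 ≤ nIdx t := by
    rw [nIdx, ← hS]; exact le_csSup hbdd h1S
  have hnot : nIdx t + 1 ∉ S := by
    intro h
    have := le_csSup hbdd h
    rw [nIdx, ← hS] at this
    omega
  simp only [hS, Set.mem_setOf_eq] at hmem hnot
  exact ⟨hge1, hmem, lt_of_not_ge (by simpa using hnot)⟩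

lemma gfun_bounds {t : ℝ} (h0 : 0 ≤ t) (h1 : t < 1) : 0 ≤ gfun t ∧ gfun t < 1 := by
  rw [gfun]
  split_ifs with ha
  · constructor <;> linarith
  · push_neg at ha
    obtain ⟨hn1, hlo, hhi⟩ := nIdx_spec ha h1
    set n := nIdx t
    have hapos := aseq_pos hn1
    have hkey := aseq_key hn1
    have hA : (0:ℝ) < 1 / 2 ^ n.factorial := by positivity
    have hB : (0:ℝ) < 1 / 2 ^ (n + 1).factorial := by positivity
    have hC : (0:ℝ) < 1 / 2 ^ (n + 2).factorial := by positivity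
    have hB1 : 1 / (2:ℝ) ^ (n + 1).factorial ≤ 1 := by
      rw [div_le_one (by positivity)]
      exact one_le_pow₀ one_le_two
    rw [bseq]
    constructor
    · nlinarith [mul_le_mul_of_nonneg_left hlo hapos.le]
    · nlinarith [mul_lt_mul_of_pos_left hhi hapos, hkey, hC]

lemma gfun_ge_one {t : ℝ} (h : 1 ≤ t) : gfun t = t := by
  rw [gfun, if_neg (by linarith), if_neg (by linarith)]

lemma fmap_mem {x : ℂ} (h : ‖x‖ < 1) : ‖fmap x‖ < 1 := by
  rw [fmap]
  split_ifs with h0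
  · simpa using one_pos
  · have hxpos : (0:ℝ) < ‖x‖ := norm_pos_iff.2 h0
    obtain ⟨hg0, hg1⟩ := gfun_bounds (norm_nonneg x) h
    rw [norm_smul, Real.norm_eq_abs, abs_of_nonneg (div_nonneg hg0 hxpos.le),
      div_mul_cancel₀ _ hxpos.ne']
    exact hg1

lemma fmap_id {x : ℂ} (h : 1 ≤ ‖x‖) : fmap x = x := by
  have h0 : x ≠ 0 := by
    intro h'; rw [h'] at h; simp at h; linarith
  rw [fmap, if_neg h0, gfun_ge_one h, div_self (by positivity : ‖x‖ ≠ 0), one_smul]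

end Gfun2

/-- The map `f` of Example 1 is `(1,4)`-coarsely
quasihyperbolic on `B(2)`. -/
theorem stmt12 (x y : ℂ) (hx : x ∈ Metric.ball (0 : ℂ) 2) (hy : y ∈ Metric.ball (0 : ℂ) 2) :
    |qhDist (Metric.ball (0 : ℂ) 2) (fmap x) (fmap y) -
      qhDist (Metric.ball (0 : ℂ) 2) x y| ≤ 4 := by
  have hx2 : ‖x‖ < 2 := by rwa [Metric.mem_ball, dist_zero_right] at hx
  have hy2 : ‖y‖ < 2 := by rwa [Metric.mem_ball, dist_zero_right] at hy
  rcases lt_or_ge ‖x‖ 1 with hx1 | hx1 <;> rcases lt_or_ge ‖y‖ 1 with hy1 | hy1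
  · -- both in the unit disk
    have A1 : qhDist (Metric.ball (0 : ℂ) 2) (fmap x) (fmap y) ≤ 2 :=
      qhDist_le_two (fmap_mem hx1) (fmap_mem hy1)
    have A2 := qhDist_nonneg' (fmap x) (fmap y)
    have B1 : qhDist (Metric.ball (0 : ℂ) 2) x y ≤ 2 := qhDist_le_two hx1 hy1
    have B2 := qhDist_nonneg' x y
    rw [abs_le]; constructor <;> linarith
  · -- x in the unit disk, y outside
    rw [fmap_id hy1]
    have h1 : qhDist (Metric.ball (0 : ℂ) 2) (fmap x) y
        ≤ 2 + qhDist (Metric.ball (0 : ℂ) 2) x y :=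
      qhDist_prepend (fmap_mem hx1) hx1 hy2
    have h2 : qhDist (Metric.ball (0 : ℂ) 2) x y
        ≤ 2 + qhDist (Metric.ball (0 : ℂ) 2) (fmap x) y :=
      qhDist_prepend hx1 (fmap_mem hx1) hy2
    rw [abs_le]; constructor <;> linarith
  · -- y in the unit disk, x outside
    rw [fmap_id hx1]
    have h1 : qhDist (Metric.ball (0 : ℂ) 2) x (fmap y)
        ≤ qhDist (Metric.ball (0 : ℂ) 2) x y + 2 :=
      qhDist_append hx2 hy1 (fmap_mem hy1)
    have h2 : qhDist (Metric.ball (0 : ℂ) 2) x y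
        ≤ qhDist (Metric.ball (0 : ℂ) 2) x (fmap y) + 2 :=
      qhDist_append hx2 (fmap_mem hy1) hy1
    rw [abs_le]; constructor <;> linarith
  · rw [fmap_id hx1, fmap_id hy1, sub_self, abs_zero]
    norm_num

end
end
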